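/- For the complete bipartite graph K_{2,n} with a and b the two vertices on the side of size 2, the shortest path graph S(K_{2,n}, a, b) is isomorphic to the complete graph K_n. -/

import Mathlib

open SimpleGraph

/-- The type of `a,b`-geodesics in `G`: paths from `a` to `b` of length `d_G(a,b)`. -/
def Geodesic {V : Type*} (G : SimpleGraph V) (a b : V) : Type _ :=
  {p : G.Walk a b // p.IsPath ∧ p.length = G.dist a b}

/-- Two geodesics differ at exactly the index `i` (comparing vertex sequences). -/
def DiffAt {V : Type*} {G : SimpleGraph V} {a b : V} (U W : Geodesic G a b) (i : ℕ) : Prop :=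
  U.1.support.getD i a ≠ W.1.support.getD i a ∧
    ∀ j, j ≠ i → U.1.support.getD j a = W.1.support.getD j a

/-- The shortest path graph `S(G,a,b)`: vertices are `a,b`-geodesics, adjacent iff their
vertex sequences differ in exactly one position. -/
def SPG {V : Type*} (G : SimpleGraph V) (a b : V) : SimpleGraph (Geodesic G a b) where
  Adj U W := ∃ i, DiffAt U W i
  symm := by
    refine ⟨?_⟩
    rintro U W ⟨i, hne, hj⟩
    exact ⟨i, hne.symm, fun j hji => (hj j hji).symm⟩
  loopless := by
    refine ⟨?_⟩
    rintro U ⟨i, hne, -⟩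
    exact hne rfl

/-- A graph is a shortest path graph if it is isomorphic to `S(G,a,b)` for some `G`, `a ≠ b`. -/
def IsSPGraph {α : Type*} (H : SimpleGraph α) : Prop :=
  ∃ (V : Type) (G : SimpleGraph V) (a b : V), a ≠ b ∧ Nonempty (H ≃g SPG G a b)

namespace SPGaux

variable {m : ℕ}

lemma hne {m : ℕ} : (Sum.inl 0 : Fin 2 ⊕ Fin (m+1)) ≠ Sum.inl 1 := by simp [Fin.ext_iff]

lemma ha (k : Fin (m+1)) :
    (completeBipartiteGraph (Fin 2) (Fin (m+1))).Adj (Sum.inl 0) (Sum.inr k) := by simp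

lemma hb (k : Fin (m+1)) :
    (completeBipartiteGraph (Fin 2) (Fin (m+1))).Adj (Sum.inr k) (Sum.inl 1) := by simp

lemma hdist (m : ℕ) :
    (completeBipartiteGraph (Fin 2) (Fin (m+1))).dist (Sum.inl 0) (Sum.inl 1) = 2 := by
  have hle : (completeBipartiteGraph (Fin 2) (Fin (m+1))).dist (Sum.inl 0) (Sum.inl 1) ≤ 2 :=
    SimpleGraph.dist_le (Walk.cons (ha 0) (Walk.cons (hb 0) Walk.nil))
  have hr : (completeBipartiteGraph (Fin 2) (Fin (m+1))).Reachable (Sum.inl 0) (Sum.inl 1) :=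
    ⟨Walk.cons (ha 0) (Walk.cons (hb 0) Walk.nil)⟩
  have h0 : (completeBipartiteGraph (Fin 2) (Fin (m+1))).dist (Sum.inl 0) (Sum.inl 1) ≠ 0 :=
    (hr.pos_dist_of_ne hne).ne'
  have h1 : (completeBipartiteGraph (Fin 2) (Fin (m+1))).dist (Sum.inl 0) (Sum.inl 1) ≠ 1 := by
    intro h
    obtain ⟨p, hp⟩ := SimpleGraph.exists_walk_of_dist_ne_zero h0
    have had := p.adj_of_length_eq_one (by rw [hp, h])
    simp at had
  omega

def geo (m : ℕ) (k : Fin (m+1)) :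
    Geodesic (completeBipartiteGraph (Fin 2) (Fin (m+1))) (Sum.inl 0) (Sum.inl 1) :=
  ⟨Walk.cons (ha k) (Walk.cons (hb k) Walk.nil), by
    constructor
    · rw [Walk.isPath_def]
      simp [Fin.ext_iff]
    · simp [hdist]⟩

lemma geo_support (k : Fin (m+1)) :
    (geo m k).1.support = [Sum.inl 0, Sum.inr k, Sum.inl 1] := by
  simp [geo]

lemma walk_eq (p : (completeBipartiteGraph (Fin 2) (Fin (m+1))).Walk (Sum.inl 0) (Sum.inl 1))
    (hl : p.length = 2) :
    ∃ k, p = Walk.cons (ha k) (Walk.cons (hb k) Walk.nil) := by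
  cases p with
  | cons h q =>
    cases q with
    | nil => simp at hl
    | cons h' r =>
      cases r with
      | cons h'' s => simp at hl
      | nil =>
        rename_i x
        cases x with
        | inl i => exact absurd h (by simp)
        | inr k => exact ⟨k, rfl⟩

lemma geo_surj (U : Geodesic (completeBipartiteGraph (Fin 2) (Fin (m+1)))
    (Sum.inl 0) (Sum.inl 1)) : ∃ k, U = geo m k := by
  obtain ⟨k, hk⟩ := walk_eq U.1 (by rw [U.2.2, hdist])
  exact ⟨k, Subtype.ext hk⟩

lemma geo_inj : Function.Injective (geo m) := by
  intro k l h
  have := congrArg (fun U : Geodesic (completeBipartiteGraph (Fin 2) (Fin (m+1)))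
    (Sum.inl 0) (Sum.inl 1) => U.1.support.getD 1 (Sum.inl 0)) h
  simpa [geo_support] using this

end SPGaux

theorem stmt2 (n : ℕ) :
    Nonempty (SPG (completeBipartiteGraph (Fin 2) (Fin n)) (Sum.inl 0) (Sum.inl 1) ≃g
      (⊤ : SimpleGraph (Fin n))) := by
  match n with
  | 0 =>
    have hbot : completeBipartiteGraph (Fin 2) (Fin 0) = ⊥ := by
      ext v w
      rcases w with w | k
      · rcases v with v | k
        · simp
        · exact k.elim0
      · exact k.elim0
    have : IsEmpty (Geodesic (completeBipartiteGraph (Fin 2) (Fin 0))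
        (Sum.inl 0) (Sum.inl 1)) := by
      constructor
      rintro ⟨p, hp, hl⟩
      have hnr : ¬ (completeBipartiteGraph (Fin 2) (Fin 0)).Reachable
          (Sum.inl 0) (Sum.inl 1) := by
        rw [hbot, reachable_bot]
        simp [Fin.ext_iff]
      rw [SimpleGraph.dist_eq_zero_of_not_reachable hnr] at hl
      have := p.eq_of_length_eq_zero hl
      simp [Fin.ext_iff] at this
    exact ⟨⟨Equiv.equivOfIsEmpty _ _, fun {U W} => isEmptyElim U⟩⟩
  | Nat.succ m =>
    refine ⟨⟨(Equiv.ofBijective (SPGaux.geo m) ⟨SPGaux.geo_inj, fun U => by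
      obtain ⟨k, hk⟩ := SPGaux.geo_surj U; exact ⟨k, hk.symm⟩⟩).symm, ?_⟩⟩
    intro U W
    simp only [top_adj, ne_eq, EmbeddingLike.apply_eq_iff_eq]
    constructor
    · intro hUW
      obtain ⟨k, rfl⟩ := SPGaux.geo_surj U
      obtain ⟨l, rfl⟩ := SPGaux.geo_surj W
      have hkl : k ≠ l := fun h => hUW (by rw [h])
      refine ⟨1, ?_, ?_⟩
      · simp [SPGaux.geo_support, hkl]
      · intro j hj
        rcases j with _ | _ | _ | j <;> simp_all [SPGaux.geo_support]
    · rintro ⟨i, hne, -⟩ hUW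
      exact hne (by rw [hUW])
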